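/- For positive integers k ≥ 1 and m ≥ 1, the k-edge-colored graph H_m^k (vertex set X0 ⊔ X1 ⊔ ... ⊔ X_k with |X0| = (k−1)m and |X_i| = m for 1 ≤ i ≤ k; edges: all pairs between X0 and ∪_{i=1}^k X_i, and a clique on each X_i for 1 ≤ i ≤ k; color class E_i consists of all edges incident with a vertex of X_i) contains no non-monochromatic triangle, and each color class satisfies |E_i| = C(m,2) + (k−1)m^2. -/

import Mathlib

/-- The graph `H_m^k`: vertex set `X0 ⊔ X1 ⊔ ... ⊔ Xk` with `|X0| = (k-1)m` and
`|Xi| = m` for `1 ≤ i ≤ k`; all edges between `X0` and the other parts, and a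
clique on each `Xi`, `1 ≤ i ≤ k`. -/
def HkGraph (k m : ℕ) : SimpleGraph (Fin ((k - 1) * m) ⊕ (Fin k × Fin m)) :=
  SimpleGraph.fromRel (fun x y =>
    match x, y with
    | Sum.inl _, Sum.inr _ => True
    | Sum.inr p, Sum.inr q => p.1 = q.1
    | _, _ => False)

/-- membership in part `X_i`, `1 ≤ i ≤ k` -/
def inPart {k m : ℕ} (i : Fin k) (v : Fin ((k - 1) * m) ⊕ (Fin k × Fin m)) : Prop :=
  ∃ a : Fin m, v = Sum.inr (i, a)

lemma hk_adj_rr {k m : ℕ} {p q : Fin k × Fin m} :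
    (HkGraph k m).Adj (Sum.inr p) (Sum.inr q) ↔ p ≠ q ∧ p.1 = q.1 := by
  constructor
  · rintro ⟨hne, h | h⟩
    · exact ⟨fun hc => hne (by rw [hc]), h⟩
    · exact ⟨fun hc => hne (by rw [hc]), h.symm⟩
  · rintro ⟨hne, h⟩
    exact ⟨fun hc => hne (Sum.inr.inj hc), Or.inl h⟩

lemma hk_adj_lr {k m : ℕ} {a : Fin ((k - 1) * m)} {p : Fin k × Fin m} :
    (HkGraph k m).Adj (Sum.inl a) (Sum.inr p) := by
  exact ⟨by simp, Or.inl trivial⟩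

lemma hk_not_adj_ll {k m : ℕ} {a b : Fin ((k - 1) * m)} :
    ¬ (HkGraph k m).Adj (Sum.inl a) (Sum.inl b) := by
  rintro ⟨hne, h | h⟩ <;> exact h

open scoped Classical in
theorem Hkm_properties (k m : ℕ) (hk : 1 ≤ k) (hm : 1 ≤ m) :
    (∀ x y z : Fin ((k - 1) * m) ⊕ (Fin k × Fin m),
      (HkGraph k m).Adj x y → (HkGraph k m).Adj y z → (HkGraph k m).Adj x z →
      ∃ i : Fin k, (∃ v ∈ s(x, y), inPart i v) ∧ (∃ v ∈ s(y, z), inPart i v) ∧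
        (∃ v ∈ s(x, z), inPart i v)) ∧
    (∀ i : Fin k,
      (Finset.univ.filter (fun e : Sym2 (Fin ((k - 1) * m) ⊕ (Fin k × Fin m)) =>
          e ∈ (HkGraph k m).edgeSet ∧ ∃ v ∈ e, inPart i v)).card
        = Nat.choose m 2 + (k - 1) * m ^ 2) := by
  constructor
  · intro x y z hxy hyz hxz
    rcases x with a | p
    · rcases y with b | q
      · exact absurd hxy hk_not_adj_ll
      · rcases z with c | r
        · exact absurd hxz hk_not_adj_ll
        · -- x = inl a, y = inr q, z = inr r
          obtain ⟨-, hqr⟩ := hk_adj_rr.mp hyz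
          refine ⟨q.1, ⟨Sum.inr q, by simp, q.2, by simp⟩,
            ⟨Sum.inr q, by simp, q.2, by simp⟩,
            ⟨Sum.inr r, by simp, r.2, by rw [hqr]⟩⟩
    · rcases y with b | q
      · rcases z with c | r
        · exact absurd hyz hk_not_adj_ll
        · -- x = inr p, y = inl b, z = inr r
          obtain ⟨-, hpr⟩ := hk_adj_rr.mp hxz
          refine ⟨p.1, ⟨Sum.inr p, by simp, p.2, by simp⟩,
            ⟨Sum.inr r, by simp, r.2, by rw [hpr]⟩,
            ⟨Sum.inr p, by simp, p.2, by simp⟩⟩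
      · -- x = inr p, y = inr q
        obtain ⟨-, hpq⟩ := hk_adj_rr.mp hxy
        refine ⟨p.1, ⟨Sum.inr p, by simp, p.2, by simp⟩,
          ⟨Sum.inr q, by simp, q.2, by rw [hpq]⟩,
          ⟨Sum.inr p, by simp, p.2, by simp⟩⟩
  · intro i
    set V := Fin ((k - 1) * m) ⊕ (Fin k × Fin m)
    set f₁ : Fin ((k - 1) * m) × Fin m → Sym2 V := fun p => s(Sum.inl p.1, Sum.inr (i, p.2)) with hf₁
    set f₂ : Sym2 (Fin m) → Sym2 V := Sym2.map (fun b => (Sum.inr (i, b) : V)) with hf₂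
    have hset : (Finset.univ.filter (fun e : Sym2 V =>
          e ∈ (HkGraph k m).edgeSet ∧ ∃ v ∈ e, inPart i v))
        = (Finset.univ.filter (fun e : Sym2 (Fin m) => ¬ e.IsDiag)).image f₂ ∪
          Finset.univ.image f₁ := by
      ext e
      simp only [Finset.mem_filter, Finset.mem_univ, true_and, Finset.mem_union,
        Finset.mem_image]
      constructor
      · rintro ⟨hadj, v, hv, b, rfl⟩
        induction e with
        | _ x y =>
          rw [SimpleGraph.mem_edgeSet] at hadj
          rw [Sym2.mem_iff] at hv
          rcases x with a | p
          · rcases y with a' | q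
            · exact absurd hadj hk_not_adj_ll
            · obtain rfl : q = (i, b) := by
                rcases hv with h | h
                · exact absurd h (by simp)
                · exact (Sum.inr.inj h).symm
              exact Or.inr ⟨(a, b), rfl⟩
          · rcases y with a' | q
            · obtain rfl : p = (i, b) := by
                rcases hv with h | h
                · exact (Sum.inr.inj h).symm
                · exact absurd h (by simp)
              exact Or.inr ⟨(a', b), by simp [hf₁, Sym2.eq_swap]⟩
            · obtain ⟨p1, p2⟩ := p
              obtain ⟨q1, q2⟩ := q
              obtain ⟨hne, h3⟩ := hk_adj_rr.mp hadj
              simp only at h3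
              subst h3
              have hi : p1 = i := by
                rcases hv with h | h
                · exact (congrArg Prod.fst (Sum.inr.inj h)).symm
                · exact (congrArg Prod.fst (Sum.inr.inj h)).symm
              subst hi
              refine Or.inl ⟨s(p2, q2), ?_, ?_⟩
              · simp only [Finset.mem_filter, Finset.mem_univ, true_and,
                  Sym2.isDiag_iff_proj_eq]
                exact fun h => hne (by rw [h])
              · simp only [hf₂, Sym2.map_pair_eq]
      · rintro (⟨e', he', heq⟩ | ⟨⟨a, b⟩, -, heq⟩)
        · rw [← heq]
          induction e' with
          | _ b c =>
            rw [Sym2.isDiag_iff_proj_eq] at he'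
            simp only [hf₂, Sym2.map_pair_eq]
            refine ⟨(SimpleGraph.mem_edgeSet _).mpr (hk_adj_rr.mpr ⟨?_, rfl⟩),
              Sum.inr (i, b), by simp, b, rfl⟩
            intro h
            exact he' (congrArg Prod.snd h)
        · simp only [hf₁]
          exact ⟨(SimpleGraph.mem_edgeSet _).mpr hk_adj_lr, Sum.inr (i, b), by simp, b, rfl⟩
    rw [hset, Finset.card_union_of_disjoint, Finset.card_image_of_injective,
      Finset.card_image_of_injective]
    · have h2 : (Finset.univ.filter (fun e : Sym2 (Fin m) => ¬ e.IsDiag)).card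
          = Nat.choose m 2 := by
        rw [← Fintype.card_subtype, Sym2.card_subtype_not_diag, Fintype.card_fin]
      rw [h2, Finset.card_univ, Fintype.card_prod, Fintype.card_fin, Fintype.card_fin, sq,
        mul_assoc]
    · intro p q h
      simp only [hf₁, Sym2.eq_iff] at h
      rcases h with ⟨h1, h2⟩ | ⟨h1, h2⟩
      · have h3 : ((i, p.2) : Fin k × Fin m) = (i, q.2) := Sum.inr.inj h2
        have h4 := congrArg Prod.snd h3
        exact Prod.ext (Sum.inl.inj h1) h4
      · exact absurd h1 (by simp)
    · exact Sym2.map.injective (fun a b h => congrArg Prod.snd (Sum.inr.inj h))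
    · rw [Finset.disjoint_left]
      rintro e he he'
      simp only [Finset.mem_image, Finset.mem_filter] at he he'
      obtain ⟨e', -, rfl⟩ := he
      obtain ⟨⟨a, b⟩, -, heq⟩ := he'
      induction e' with
      | _ c d =>
        simp only [hf₂, hf₁, Sym2.map_pair_eq, Sym2.eq_iff] at heq
        rcases heq with ⟨h, -⟩ | ⟨h, -⟩ <;> exact Sum.inl_ne_inr h
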